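/- For every n ≥ 1, the directed n-path (vertices v_1, …, v_n with arcs v_i → v_{i+1} for 1 ≤ i ≤ n−1, all oriented in the same direction) is (2,3)-cordial. -/

import Mathlib

open Finset

/-- A (0,1)-vertex labeling is friendly if the counts of 0s and 1s differ by at most 1. -/
def vertexFriendly {V : Type*} [Fintype V] (f : V → ℤ) : Prop :=
  |((univ.filter (fun v => f v = 0)).card : ℤ) - ((univ.filter (fun v => f v = 1)).card : ℤ)| ≤ 1

/-- Number of arcs of `A` receiving induced label `i` under `g (u,v) = f v - f u`. -/
def arcCount {V : Type*} [DecidableEq V] (A : Finset (V × V)) (f : V → ℤ) (i : ℤ) : ℕ :=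
  (A.filter (fun p => f p.2 - f p.1 = i)).card

/-- The induced arc labeling is friendly: counts of labels -1, 0, 1 pairwise differ by ≤ 1. -/
def arcFriendly {V : Type*} [DecidableEq V] (A : Finset (V × V)) (f : V → ℤ) : Prop :=
  ∀ i ∈ ({-1, 0, 1} : Set ℤ), ∀ j ∈ ({-1, 0, 1} : Set ℤ),
    |(arcCount A f i : ℤ) - (arcCount A f j : ℤ)| ≤ 1

/-- A digraph (given by its arc set) is (2,3)-cordial. -/
def cordial23 {V : Type*} [Fintype V] [DecidableEq V] (A : Finset (V × V)) : Prop :=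
  ∃ f : V → ℤ, (∀ v, f v = 0 ∨ f v = 1) ∧ vertexFriendly f ∧ arcFriendly A f

/-- The arcs of the directed n-path on vertices Fin n: i → i+1. -/
def dirPathArcs (n : ℕ) : Finset (Fin n × Fin n) :=
  univ.filter (fun p => p.1.val + 1 = p.2.val)

/-- The periodic labeling pattern 0,1,1,0,0,1 of period 6. -/
def pat (i : ℕ) : ℤ := if i % 6 = 0 ∨ i % 6 = 3 ∨ i % 6 = 4 then 0 else 1

lemma pat_add6 (i : ℕ) : pat (i + 6) = pat i := by
  simp [pat, Nat.add_mod_right]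

def Zc (n : ℕ) : ℕ := ((range n).filter (fun i => pat i = 0)).card
def Oc (n : ℕ) : ℕ := ((range n).filter (fun i => pat i = 1)).card
def Ac (n : ℕ) (j : ℤ) : ℕ := ((range n).filter (fun i => pat (i + 1) - pat i = j)).card

lemma count_step (p : ℕ → Prop) [DecidablePred p] (hp : ∀ i, p (i + 6) ↔ p i) (n : ℕ) :
    ((range (n + 6)).filter p).card
      = ((range n).filter p).card + ((range 6).filter p).card := by
  induction n with
  | zero => simp
  | succ m ih =>
    have h7 : m + 1 + 6 = (m + 6) + 1 := by omega
    rw [h7, range_add_one (n := m + 6), range_add_one (n := m), filter_insert, filter_insert]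
    by_cases h : p m
    · rw [if_pos ((hp m).mpr h), if_pos h,
        card_insert_of_notMem (by simp), card_insert_of_notMem (by simp), ih]
      omega
    · rw [if_neg (fun hc => h ((hp m).mp hc)), if_neg h, ih]

lemma Zc_step (n : ℕ) : Zc (n + 6) = Zc n + 3 := by
  have := count_step (fun i => pat i = 0) (fun i => by simp only [pat_add6]) n
  have h6 : ((range 6).filter (fun i => pat i = 0)).card = 3 := by decide
  unfold Zc; rw [this, h6]

lemma Oc_step (n : ℕ) : Oc (n + 6) = Oc n + 3 := by
  have := count_step (fun i => pat i = 1) (fun i => by simp only [pat_add6]) n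
  have h6 : ((range 6).filter (fun i => pat i = 1)).card = 3 := by decide
  unfold Oc; rw [this, h6]

lemma Ac_step (n : ℕ) (j : ℤ) (hj : j = -1 ∨ j = 0 ∨ j = 1) : Ac (n + 6) j = Ac n j + 2 := by
  have := count_step (fun i => pat (i + 1) - pat i = j)
    (fun i => by simp only [show i + 6 + 1 = i + 1 + 6 from by omega, pat_add6]) n
  have h6 : ((range 6).filter (fun i => pat (i + 1) - pat i = j)).card = 2 := by
    rcases hj with rfl | rfl | rfl <;> decide
  unfold Ac; rw [this, h6]

lemma key1 : ∀ n, |(Zc n : ℤ) - Oc n| ≤ 1 := by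
  intro n
  induction n using Nat.strong_induction_on with
  | _ n ih =>
    rcases lt_or_ge n 6 with h | h
    · interval_cases n <;> decide
    · obtain ⟨m, rfl⟩ : ∃ m, n = m + 6 := ⟨n - 6, by omega⟩
      have H := ih m (by omega)
      rw [Zc_step, Oc_step]
      rw [abs_sub_le_iff] at H ⊢
      push_cast
      omega

lemma key2 : ∀ n, |(Ac n (-1) : ℤ) - Ac n 0| ≤ 1 ∧ |(Ac n (-1) : ℤ) - Ac n 1| ≤ 1 ∧
    |(Ac n 0 : ℤ) - Ac n 1| ≤ 1 := by
  intro n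
  induction n using Nat.strong_induction_on with
  | _ n ih =>
    rcases lt_or_ge n 6 with h | h
    · interval_cases n <;> decide
    · obtain ⟨m, rfl⟩ : ∃ m, n = m + 6 := ⟨n - 6, by omega⟩
      have H := ih m (by omega)
      rw [Ac_step m (-1) (by norm_num), Ac_step m 0 (by norm_num), Ac_step m 1 (by norm_num)]
      simp only [abs_sub_le_iff] at H ⊢
      push_cast
      omega

lemma fin_count (n : ℕ) (q : ℕ → Prop) [DecidablePred q] :
    (univ.filter (fun v : Fin n => q v.val)).card = ((range n).filter q).card := by
  rw [card_filter, card_filter, Fin.sum_univ_eq_sum_range (fun k => if q k then (1:ℕ) else 0) n]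

lemma arc_count_eq (n : ℕ) (j : ℤ) :
    arcCount (dirPathArcs n) (fun v => pat v.val) j = Ac (n - 1) j := by
  unfold arcCount dirPathArcs Ac
  rw [filter_filter]
  apply card_bij (fun (p : Fin n × Fin n) _ => p.1.val)
  · intro a ha
    simp only [mem_filter, mem_univ, true_and] at ha
    obtain ⟨h1, h2⟩ := ha
    have hlt : a.2.val < n := a.2.isLt
    simp only [mem_filter, mem_range]
    constructor
    · omega
    · rw [h1, h2]
  · intro a ha b hb hab
    simp only [mem_filter, mem_univ, true_and] at ha hb
    have h1 : a.1 = b.1 := Fin.ext hab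
    have h2 : a.2 = b.2 := Fin.ext (by omega)
    exact Prod.ext h1 h2
  · intro b hb
    simp only [mem_filter, mem_range] at hb
    obtain ⟨hlt, hcond⟩ := hb
    exact ⟨(Fin.mk b (by omega), Fin.mk (b + 1) (by omega)),
      mem_filter.mpr ⟨mem_univ _, rfl, hcond⟩, rfl⟩

/-- Every directed n-path, n ≥ 1, is (2,3)-cordial. -/
theorem directedPath_cordial (n : ℕ) (hn : 1 ≤ n) : cordial23 (dirPathArcs n) := by
  refine ⟨fun v => pat v.val, ?_, ?_, ?_⟩
  · intro v
    simp only [pat]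
    split <;> simp
  · unfold vertexFriendly
    rw [fin_count n (fun i => pat i = 0), fin_count n (fun i => pat i = 1)]
    exact key1 n
  · intro i hi j hj
    obtain ⟨H1, H2, H3⟩ := key2 (n - 1)
    simp only [Set.mem_insert_iff, Set.mem_singleton_iff] at hi hj
    rw [arc_count_eq, arc_count_eq]
    rw [abs_sub_le_iff] at H1 H2 H3 ⊢
    rcases hi with rfl | rfl | rfl <;> rcases hj with rfl | rfl | rfl <;> omega
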